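/- For all real t and x, with ξ = (t+x)/2 and η = (t−x)/2 and t ≥ 0, one has ⟨ξ⟩^{-(1+δ)}⟨η⟩^{-(1+δ)} ≤ C ⟨t⟩^{-(1+δ)} ⟨t−|x|⟩^{-(1+δ)}, where C depends only on δ > 0. -/
import Mathlib

lemma stmt_9_aux (A B T S e : ℝ) (hA : 0 < A) (hB : 0 < B) (hT : 0 < T) (hS : 0 < S)
    (he : e < 0) (hkey : T * S ≤ 16 * (A * B)) :
    A ^ e * B ^ e ≤ (16 : ℝ) ^ (-e) * T ^ e * S ^ e := by
  have h1 : A ^ e * B ^ e = (A * B) ^ e := (Real.mul_rpow hA.le hB.le).symm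
  have h2 : (A * B) ^ e ≤ (T * S / 16) ^ e :=
    Real.rpow_le_rpow_of_nonpos (by positivity) (by linarith) he.le
  have h3 : (T * S / 16) ^ e = (16:ℝ) ^ (-e) * T ^ e * S ^ e := by
    rw [Real.div_rpow (by positivity) (by norm_num : (0:ℝ) ≤ 16),
      Real.mul_rpow hT.le hS.le, Real.rpow_neg (by norm_num)]
    ring
  calc A ^ e * B ^ e = (A * B) ^ e := h1
    _ ≤ (T * S / 16) ^ e := h2
    _ = (16:ℝ) ^ (-e) * T ^ e * S ^ e := h3

/-- For t ≥ 0, with ξ = (t+x)/2 and η = (t−x)/2: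
    ⟨ξ⟩^{-(1+δ)}⟨η⟩^{-(1+δ)} ≤ C⟨t⟩^{-(1+δ)}⟨t−|x|⟩^{-(1+δ)}, C depending only on δ > 0. -/
theorem stmt_9 (δ : ℝ) (hδ : 0 < δ) :
    ∃ C : ℝ, 0 < C ∧ ∀ t x : ℝ, 0 ≤ t →
      (1 + ((t + x) / 2) ^ 2) ^ (-(1 + δ) / 2) * (1 + ((t - x) / 2) ^ 2) ^ (-(1 + δ) / 2) ≤
        C * (1 + t ^ 2) ^ (-(1 + δ) / 2) * (1 + (t - |x|) ^ 2) ^ (-(1 + δ) / 2) := by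
  have he0 : -(1 + δ) / 2 < 0 := by nlinarith
  refine ⟨(16 : ℝ) ^ (-(-(1 + δ) / 2)), Real.rpow_pos_of_pos (by norm_num) _, ?_⟩
  intro t x ht
  have hy0 : 0 ≤ |x| := abs_nonneg x
  have hLHS : (1 + ((t + x) / 2) ^ 2) ^ (-(1 + δ) / 2) * (1 + ((t - x) / 2) ^ 2) ^ (-(1 + δ) / 2)
      = (1 + ((t + |x|) / 2) ^ 2) ^ (-(1 + δ) / 2) * (1 + ((t - |x|) / 2) ^ 2) ^ (-(1 + δ) / 2) := by
    rcases abs_cases x with ⟨h1, _⟩ | ⟨h1, _⟩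
    · rw [h1]
    · rw [h1, show t + -x = t - x from by ring, show t - -x = t + x from by ring, mul_comm]
  rw [hLHS]
  have hkey : (1 + t ^ 2) * (1 + (t - |x|) ^ 2) ≤
      16 * ((1 + ((t + |x|) / 2) ^ 2) * (1 + ((t - |x|) / 2) ^ 2)) := by
    nlinarith [sq_nonneg (t - |x|), sq_nonneg (t + |x|), sq_nonneg ((t + |x|) * (t - |x|)),
      mul_nonneg ht hy0, sq_nonneg t, sq_nonneg |x|]
  exact stmt_9_aux _ _ _ _ _ (by positivity) (by positivity) (by positivity) (by positivity)
    he0 hkey
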